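/- Let 2 ≤ k ≤ n. There exists a constant c(n,k) > 0, depending only on n and k, such that for every λ ∈ Γ_k ⊂ ℝ^n: Σ_{i=1}^n σ_{k−1}(λ|i) ≥ c(n,k) · S_k(λ)^{(k−2)/(k−1)} · (max_i λ_i)^{1/(k−1)}. Equivalently, dividing by S_k(λ) > 0: Σ_i σ_{k−1}(λ|i)/S_k(λ) ≥ c(n,k) · (max_i λ_i)^{1/(k−1)} / S_k(λ)^{1/(k−1)}. -/

import Mathlib

open Finset

/-- The `m`-th elementary symmetric polynomial of `lam : Fin n → ℝ`. -/
noncomputable def esymmS (n m : ℕ) (lam : Fin n → ℝ) : ℝ :=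
  ∑ s ∈ Finset.univ.powersetCard m, ∏ i ∈ s, lam i

/-- The Gårding cone `Γ_m ⊆ ℝ^n`. -/
def GammaCone (n m : ℕ) (lam : Fin n → ℝ) : Prop :=
  ∀ j : ℕ, 1 ≤ j → j ≤ m → 0 < esymmS n j lam

/-- `σ_m(λ|i)`: the `m`-th elementary symmetric polynomial of `λ` with the `i`-th entry deleted. -/
noncomputable def esymmDel (n m : ℕ) (lam : Fin n → ℝ) (i : Fin n) : ℝ :=
  ∑ s ∈ (Finset.univ.erase i).powersetCard m, ∏ l ∈ s, lam l

/-- `σ_m(λ|ij)`: the `m`-th elementary symmetric polynomial of `λ` with the `i`-th and `j`-th entries deleted. -/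
noncomputable def esymmDel2 (n m : ℕ) (lam : Fin n → ℝ) (i j : Fin n) : ℝ :=
  ∑ s ∈ ((Finset.univ.erase i).erase j).powersetCard m, ∏ l ∈ s, lam l

open Polynomial

lemma splits_derivative (p : ℝ[X]) (hp : p.Splits) :
    (derivative p).Splits := by
  rcases eq_or_ne (derivative p) 0 with h | h
  · rw [h]; exact Splits.zero
  rw [splits_iff_card_roots] at hp ⊢
  have h1 := p.card_roots_le_derivative
  have h2 := (derivative p).card_roots'
  have h3 := p.natDegree_derivative_le
  omega

lemma splits_iterate_derivative (p : ℝ[X]) (hp : p.Splits) (d : ℕ) :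
    (derivative^[d] p).Splits := by
  induction d with
  | zero => exact hp
  | succ d ih => rw [Function.iterate_succ_apply']; exact splits_derivative _ ih

lemma reverse_X_sub_C (a : ℝ) : (X - C a).reverse = C (-a) * X + 1 := by
  have h1 : (X - C a).natDegree = 1 := natDegree_X_sub_C a
  unfold Polynomial.reverse
  rw [h1]
  ext m
  rw [coeff_reflect]
  match m with
  | 0 => rw [revAt_le (by omega)]; simp [coeff_one]
  | 1 => rw [revAt_le (by omega)]; simp [coeff_one]
  | (m+2) =>
    rw [revAt_eq_self_of_lt (by omega)]
    simp [coeff_X, coeff_C, coeff_one]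

lemma splits_reverse (q : ℝ[X]) (hq : q.Splits) (h0 : q.coeff 0 ≠ 0) :
    q.reverse.Splits := by
  have hr : ∀ r ∈ q.roots, r ≠ 0 := by
    intro r hr hr0
    have := (mem_roots (fun h => h0 (by simp [h])) ).mp hr
    rw [hr0] at this
    exact h0 (by rwa [Polynomial.coeff_zero_eq_eval_zero])
  have hrep := hq.eq_prod_roots
  have key : ∀ M : Multiset ℝ, (∀ r ∈ M, r ≠ 0) →
      ((M.map fun a => X - C a).prod).reverse.Splits := by
    intro M
    induction M using Multiset.induction_on with
    | empty => intro _; rw [Multiset.map_zero, Multiset.prod_zero]; show Splits (reverse (C 1)); rw [reverse_C]; exact Splits.C _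
    | cons a M ih =>
      intro hM
      rw [Multiset.map_cons, Multiset.prod_cons, reverse_mul_of_domain]
      apply Splits.mul
      · rw [reverse_X_sub_C]
        have ha : a ≠ 0 := hM a (Multiset.mem_cons_self a M)
        have : C (-a) * X + 1 = C (-a) * (X - C a⁻¹) := by
          rw [mul_sub, ← C_mul]
          field_simp
          simp
        rw [this]
        exact Splits.mul (Splits.C _) (Splits.X_sub_C _)
      · exact ih (fun r hrM => hM r (Multiset.mem_cons_of_mem hrM))
  rw [hrep, reverse_mul_of_domain, reverse_C]
  exact Splits.mul (Splits.C _) (key _ hr)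

lemma esymmS_zero (n : ℕ) (lam : Fin n → ℝ) : esymmS n 0 lam = 1 := by
  simp [esymmS]

lemma coeff_prod_lin (n : ℕ) (lam : Fin n → ℝ) (m : ℕ) (hm : m ≤ n) :
    (∏ i : Fin n, (X + C (lam i))).coeff (n - m) = esymmS n m lam := by
  have hcard : (Finset.univ : Finset (Fin n)).card = n := by simp
  have h := Finset.prod_X_add_C_coeff (Finset.univ : Finset (Fin n)) lam
      (k := n - m) (by omega)
  rw [h, esymmS]
  congr 2
  omega

lemma desc_sq_le (i : ℕ) : ((i+1).descFactorial i)^2 ≤ 2 * ((i+2).descFactorial i) * (i.descFactorial i) := by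
  have h1 : (i+1).descFactorial i = Nat.factorial (i+1) := by
    rw [Nat.descFactorial_eq_factorial_mul_choose]
    have : (i+1).choose i = i + 1 := by
      rw [← Nat.choose_symm (by omega)]
      simp
    rw [this, Nat.factorial_succ, mul_comm]
  have h2 : 2 * ((i+2).descFactorial i) = Nat.factorial (i+2) := by
    rw [Nat.descFactorial_eq_factorial_mul_choose]
    have hsymm : (i+2).choose i = (i+2).choose 2 := by
      have := Nat.choose_symm (n := i+2) (k := 2) (by omega)
      simpa using this
    have key := Nat.choose_mul_factorial_mul_factorial (n := i+2) (k := 2) (by omega)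
    have h2f : Nat.factorial 2 = 2 := rfl
    rw [h2f] at key
    simp only [Nat.add_sub_cancel] at key
    rw [hsymm]
    calc 2 * (Nat.factorial i * (i+2).choose 2) = (i+2).choose 2 * 2 * Nat.factorial i := by ring
      _ = Nat.factorial (i+2) := key
  have h3 : i.descFactorial i = Nat.factorial i := Nat.descFactorial_self i
  calc ((i+1).descFactorial i)^2 = Nat.factorial (i+1) * ((i+1) * Nat.factorial i) := by
        rw [h1, pow_two, Nat.factorial_succ]
    _ ≤ Nat.factorial (i+1) * ((i+2) * Nat.factorial i) :=
        Nat.mul_le_mul_left _ (Nat.mul_le_mul_right _ (by omega))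
    _ = (i+2) * Nat.factorial (i+1) * Nat.factorial i := by ring
    _ = Nat.factorial (i+2) * Nat.factorial i := by rw [Nat.factorial_succ (i+1)]
    _ = 2 * ((i+2).descFactorial i) * (i.descFactorial i) := by rw [h2, h3]

lemma newton_ineq (n : ℕ) (lam : Fin n → ℝ) (i : ℕ) (hin : i + 2 ≤ n)
    (hnn : 0 ≤ esymmS n i lam * esymmS n (i+2) lam) :
    esymmS n i lam * esymmS n (i+2) lam ≤ esymmS n (i+1) lam ^ 2 := by
  rcases eq_or_ne (esymmS n (i+2) lam) 0 with h2 | h2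
  · rw [h2, mul_zero]; positivity
  set P : ℝ[X] := ∏ j : Fin n, (X + C (lam j)) with hP
  have hPsplits : P.Splits := by
    apply Splits.prod
    intro j _
    have : X + C (lam j) = X - C (-(lam j)) := by rw [map_neg, sub_neg_eq_add]
    rw [this]
    exact Splits.X_sub_C _
  have hPdeg : P.natDegree = n := by
    rw [hP, natDegree_prod_of_monic _ _ (fun j _ => monic_X_add_C _)]
    simp [natDegree_X_add_C]
  set d := n - (i + 2) with hd
  set q := derivative^[d] P with hq
  have hqs : q.Splits := splits_iterate_derivative P hPsplits d
  have hqcoeff : ∀ m, m ≤ i + 2 → q.coeff m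
      = ((m + d).descFactorial d : ℝ) * esymmS n (i + 2 - m) lam := by
    intro m hm
    rw [hq, Polynomial.coeff_iterate_derivative, nsmul_eq_mul]
    congr 1
    have hmd : m + d = n - (i + 2 - m) := by omega
    rw [hmd, coeff_prod_lin n lam _ (by omega)]
  have hdesc : ∀ a b : ℕ, (((a + b).descFactorial b : ℕ) : ℝ) ≠ 0 := by
    intro a b
    simp only [ne_eq, Nat.cast_eq_zero, Nat.descFactorial_eq_zero_iff_lt]
    omega
  have hq0 : q.coeff 0 ≠ 0 := by
    rw [hqcoeff 0 (by omega), Nat.sub_zero]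
    exact mul_ne_zero (hdesc 0 d) h2
  have hqdeg : q.natDegree = i + 2 := by
    apply le_antisymm
    · have h1 := Polynomial.natDegree_iterate_derivative P d
      rw [← hq, hPdeg] at h1
      omega
    · apply le_natDegree_of_ne_zero
      rw [hqcoeff (i+2) le_rfl]
      rw [Nat.sub_self, esymmS_zero, mul_one]
      exact hdesc (i+2) d
  set w := q.reverse with hw
  have hws : w.Splits := splits_reverse q hqs hq0
  have hwcoeff : ∀ m, m ≤ i + 2 → w.coeff m = q.coeff (i + 2 - m) := by
    intro m hm
    rw [hw, coeff_reverse, hqdeg, revAt_le hm]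
  set r := derivative^[i] w with hr
  have hrs : r.Splits := splits_iterate_derivative _ hws i
  have hrcoeff : ∀ m, m ≤ 2 → r.coeff m
      = ((m + i).descFactorial i : ℝ) * q.coeff (2 - m) := by
    intro m hm
    rw [hr, Polynomial.coeff_iterate_derivative, nsmul_eq_mul, hwcoeff (m+i) (by omega)]
    congr 2
    omega
  have hA : r.coeff 2 = ((2 + i).descFactorial i : ℝ) *
      (((0 + d).descFactorial d : ℝ) * esymmS n (i+2) lam) := by
    rw [hrcoeff 2 le_rfl, show (2:ℕ) - 2 = 0 from rfl, hqcoeff 0 (by omega), Nat.sub_zero]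
  have hB : r.coeff 1 = ((1 + i).descFactorial i : ℝ) *
      (((1 + d).descFactorial d : ℝ) * esymmS n (i+1) lam) := by
    rw [hrcoeff 1 (by omega), show (2:ℕ) - 1 = 1 from rfl, hqcoeff 1 (by omega),
      show i + 2 - 1 = i + 1 from rfl]
  have hC : r.coeff 0 = ((0 + i).descFactorial i : ℝ) *
      (((2 + d).descFactorial d : ℝ) * esymmS n i lam) := by
    rw [hrcoeff 0 (by omega), show (2:ℕ) - 0 = 2 from rfl, hqcoeff 2 (by omega),
      show i + 2 - 2 = i from rfl]
  have hA0 : r.coeff 2 ≠ 0 := by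
    rw [hA]
    exact mul_ne_zero (hdesc 2 i) (mul_ne_zero (hdesc 0 d) h2)
  have hrdeg2 : r.natDegree = 2 := by
    apply le_antisymm
    · have h1 := Polynomial.natDegree_iterate_derivative w i
      rw [← hr] at h1
      have h3 : w.natDegree ≤ i + 2 := hqdeg ▸ q.reverse_natDegree_le
      omega
    · exact le_natDegree_of_ne_zero hA0
  have hrne : r ≠ 0 := fun h => hA0 (by simp [h])
  obtain ⟨x, hx⟩ := hrs.exists_eval_eq_zero (by
    rw [degree_eq_natDegree hrne, hrdeg2]
    exact (by norm_num : ((2 : ℕ) : WithBot ℕ) ≠ 0))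
  have hx0 : r.eval x = 0 := hx
  have heval : r.coeff 2 * (x * x) + r.coeff 1 * x + r.coeff 0 = 0 := by
    have he := Polynomial.eval_eq_sum_range (p := r) x
    rw [hrdeg2, hx0] at he
    rw [Finset.sum_range_succ, Finset.sum_range_succ, Finset.sum_range_one] at he
    linear_combination -he
  have hdisc := (quadratic_eq_zero_iff_discrim_eq_sq hA0 x).mp heval
  have hdiscnn : 0 ≤ r.coeff 1 ^ 2 - 4 * r.coeff 2 * r.coeff 0 := by
    rw [show r.coeff 1 ^ 2 - 4 * r.coeff 2 * r.coeff 0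
        = discrim (r.coeff 2) (r.coeff 1) (r.coeff 0) from by rw [discrim], hdisc]
    positivity
  rw [hA, hB, hC] at hdiscnn
  -- numeric part
  have n1 : (((1+i).descFactorial i : ℕ) : ℝ)^2
      ≤ 2 * (((2+i).descFactorial i : ℕ) : ℝ) * (((0+i).descFactorial i : ℕ) : ℝ) := by
    have h := desc_sq_le i
    rw [Nat.add_comm 1 i, Nat.add_comm 2 i, Nat.zero_add]
    exact_mod_cast h
  have n2 : (((1+d).descFactorial d : ℕ) : ℝ)^2
      ≤ 2 * (((2+d).descFactorial d : ℕ) : ℝ) * (((0+d).descFactorial d : ℕ) : ℝ) := by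
    have h := desc_sq_le d
    rw [Nat.add_comm 1 d, Nat.add_comm 2 d, Nat.zero_add]
    exact_mod_cast h
  set S0 := esymmS n i lam
  set S1 := esymmS n (i+1) lam
  set S2 := esymmS n (i+2) lam
  set a1 : ℝ := (((1+i).descFactorial i : ℕ) : ℝ)
  set a2 : ℝ := (((2+i).descFactorial i : ℕ) : ℝ)
  set a0 : ℝ := (((0+i).descFactorial i : ℕ) : ℝ)
  set b0 : ℝ := (((0+d).descFactorial d : ℕ) : ℝ)
  set b1 : ℝ := (((1+d).descFactorial d : ℕ) : ℝ)
  set b2 : ℝ := (((2+d).descFactorial d : ℕ) : ℝ)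
  have ha1p : 0 < a1 := by
    have h : (1+i).descFactorial i ≠ 0 := by
      simp only [ne_eq, Nat.descFactorial_eq_zero_iff_lt]; omega
    show (0:ℝ) < (((1+i).descFactorial i : ℕ) : ℝ)
    exact_mod_cast Nat.pos_of_ne_zero h
  have hb1p : 0 < b1 := by
    have h : (1+d).descFactorial d ≠ 0 := by
      simp only [ne_eq, Nat.descFactorial_eq_zero_iff_lt]; omega
    show (0:ℝ) < (((1+d).descFactorial d : ℕ) : ℝ)
    exact_mod_cast Nat.pos_of_ne_zero h
  have ha2n : 0 ≤ a2 := Nat.cast_nonneg _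
  have ha0n : 0 ≤ a0 := Nat.cast_nonneg _
  have hb0n : 0 ≤ b0 := Nat.cast_nonneg _
  have hb2n : 0 ≤ b2 := Nat.cast_nonneg _
  have hnum : (a1 * b1)^2 ≤ 4 * ((a2 * b0) * (a0 * b2)) := by nlinarith
  have hleft : (a1 * b1)^2 * (S0 * S2) ≤ 4 * ((a2 * b0) * (a0 * b2)) * (S0 * S2) :=
    mul_le_mul_of_nonneg_right hnum hnn
  have hright : 4 * ((a2 * b0) * (a0 * b2)) * (S0 * S2) ≤ (a1 * b1)^2 * S1^2 := by
    nlinarith [hdiscnn]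
  have hfin : (a1 * b1)^2 * (S0 * S2) ≤ (a1 * b1)^2 * S1^2 := le_trans hleft hright
  have hp : 0 < (a1 * b1)^2 := by positivity
  exact le_of_mul_le_mul_left hfin hp

lemma esymmS_one (n : ℕ) (lam : Fin n → ℝ) : esymmS n 1 lam = ∑ i, lam i := by
  rw [esymmS, Finset.powersetCard_one, Finset.sum_map]
  simp

lemma sq_sum_gen {ι : Type*} [DecidableEq ι] (s : Finset ι) (f : ι → ℝ) :
    (∑ i ∈ s, f i)^2 = ∑ i ∈ s, (f i)^2 + 2 * ∑ t ∈ s.powersetCard 2, ∏ i ∈ t, f i := by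
  induction s using Finset.induction_on with
  | empty =>
    rw [show Finset.powersetCard 2 (∅ : Finset ι) = ∅ from
      Finset.powersetCard_eq_empty.mpr (by simp)]
    simp
  | @insert a s ha ih =>
    rw [Finset.sum_insert ha, Finset.sum_insert ha, Finset.powersetCard_succ_insert ha,
      Finset.sum_union (by
        rw [Finset.disjoint_left]
        intro t ht htim
        rw [Finset.mem_powersetCard] at ht
        rw [Finset.mem_image] at htim
        obtain ⟨u, hu, hut⟩ := htim
        have : a ∈ t := hut ▸ Finset.mem_insert_self a u
        exact ha (ht.1 this))]
    have himg : ∑ t ∈ (s.powersetCard 1).image (insert a), ∏ i ∈ t, f i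
        = f a * ∑ i ∈ s, f i := by
      rw [Finset.sum_image (by
        intro t1 h1 t2 h2 he
        rw [Finset.mem_coe, Finset.mem_powersetCard] at h1 h2
        have ha1 : a ∉ t1 := fun h => ha (h1.1 h)
        have ha2 : a ∉ t2 := fun h => ha (h2.1 h)
        rw [← Finset.erase_insert ha1, ← Finset.erase_insert ha2, he])]
      rw [Finset.mul_sum]
      rw [Finset.powersetCard_one, Finset.sum_map]
      apply Finset.sum_congr rfl
      intro i hi
      have hai : a ∉ ({i} : Finset ι) := by
        simp only [Finset.mem_singleton]
        exact fun h => ha (h ▸ hi)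
      simp only [Function.Embedding.coeFn_mk]
      rw [Finset.prod_insert hai]
      simp
    rw [himg, show Nat.succ 1 = 2 from rfl]
    linear_combination ih

lemma sq_sum_id (n : ℕ) (lam : Fin n → ℝ) :
    (esymmS n 1 lam)^2 = (∑ i, (lam i)^2) + 2 * esymmS n 2 lam := by
  rw [esymmS_one, esymmS]
  exact sq_sum_gen _ _

lemma sum_esymmDel_eq (n m : ℕ) (lam : Fin n → ℝ) :
    ∑ i : Fin n, esymmDel n m lam i = ((n - m : ℕ) : ℝ) * esymmS n m lam := by
  have hps : ∀ i : Fin n, (Finset.univ.erase i).powersetCard m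
      = (Finset.univ.powersetCard m).filter (fun s => i ∉ s) := by
    intro i
    ext s
    simp only [Finset.mem_powersetCard, Finset.mem_filter, Finset.subset_erase]
    tauto
  unfold esymmDel
  have : ∀ i : Fin n, ∑ s ∈ (Finset.univ.erase i).powersetCard m, ∏ l ∈ s, lam l
      = ∑ s ∈ Finset.univ.powersetCard m, if i ∉ s then ∏ l ∈ s, lam l else 0 := by
    intro i
    rw [hps i, Finset.sum_filter]
  rw [Finset.sum_congr rfl (fun i _ => this i), Finset.sum_comm]
  rw [esymmS, Finset.mul_sum]
  apply Finset.sum_congr rfl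
  intro s hs
  rw [Finset.mem_powersetCard] at hs
  have hfc : Finset.univ.filter (fun x => x ∉ s) = sᶜ := by
    ext x
    simp
  calc (∑ x : Fin n, if x ∉ s then ∏ l ∈ s, lam l else 0)
      = ∑ x ∈ Finset.univ.filter (fun x => x ∉ s), ∏ l ∈ s, lam l :=
        (Finset.sum_filter _ _).symm
    _ = (Finset.univ.filter (fun x => x ∉ s)).card • ∏ l ∈ s, lam l := Finset.sum_const _
    _ = ((n - m : ℕ) : ℝ) * ∏ l ∈ s, lam l := by
        rw [hfc, Finset.card_compl, hs.2, nsmul_eq_mul]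
        simp
    _ = ((n - m : ℕ) : ℝ) * ∏ i ∈ s, lam i := rfl

lemma chain_ineq (n k : ℕ) (lam : Fin n → ℝ) (hkn : k ≤ n)
    (hG : ∀ j : ℕ, 1 ≤ j → j ≤ k → 0 < esymmS n j lam) :
    ∀ j : ℕ, j + 2 ≤ k →
      esymmS n 1 lam * esymmS n (j+2) lam ^ j ≤ esymmS n (j+1) lam ^ (j+1) := by
  intro j
  induction j with
  | zero =>
    intro h
    simpa using le_refl (esymmS n 1 lam)
  | succ j ih =>
    intro h
    have ihj := ih (by omega)
    have hnew := newton_ineq n lam (j+1) (by omega)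
      (le_of_lt (mul_pos (hG (j+1) (by omega) (by omega)) (hG (j+3) (by omega) (by omega))))
    -- abbreviations
    set T1 := esymmS n 1 lam
    set Sj1 := esymmS n (j+1) lam
    set Sj2 := esymmS n (j+2) lam
    set Sj3 := esymmS n (j+3) lam
    have hSj1 : 0 < Sj1 := hG (j+1) (by omega) (by omega)
    have hSj2 : 0 < Sj2 := hG (j+2) (by omega) (by omega)
    have hSj3 : 0 < Sj3 := hG (j+3) (by omega) (by omega)
    have hT1 : 0 < T1 := hG 1 (by omega) (by omega)
    have hnew' : Sj1 * Sj3 ≤ Sj2 ^ 2 := hnew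
    -- goal : T1 * Sj3 ^ (j+1) ≤ Sj2 ^ (j+2)
    have key : (T1 * Sj3 ^ (j+1)) * Sj1 ^ (j+1) ≤ Sj2 ^ (j+2) * Sj1 ^ (j+1) := by
      have e1 : (T1 * Sj3 ^ (j+1)) * Sj1 ^ (j+1) = T1 * (Sj3 * Sj1) ^ (j+1) := by
        rw [mul_pow]; ring
      have e2 : (Sj3 * Sj1) ^ (j+1) ≤ (Sj2 ^ 2) ^ (j+1) := by
        apply pow_le_pow_left₀ (by positivity)
        calc Sj3 * Sj1 = Sj1 * Sj3 := mul_comm _ _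
          _ ≤ Sj2 ^ 2 := hnew'
      have e3 : T1 * (Sj3 * Sj1) ^ (j+1) ≤ T1 * (Sj2 ^ 2) ^ (j+1) :=
        mul_le_mul_of_nonneg_left e2 (le_of_lt hT1)
      have e4 : T1 * (Sj2 ^ 2) ^ (j+1) = (T1 * Sj2 ^ j) * Sj2 ^ (j+2) := by
        rw [← pow_mul]
        rw [show 2 * (j+1) = j + (j+2) by omega, pow_add]
        ring
      have e5 : (T1 * Sj2 ^ j) * Sj2 ^ (j+2) ≤ Sj1 ^ (j+1) * Sj2 ^ (j+2) :=
        mul_le_mul_of_nonneg_right ihj (by positivity)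
      calc (T1 * Sj3 ^ (j+1)) * Sj1 ^ (j+1) = T1 * (Sj3 * Sj1) ^ (j+1) := e1
        _ ≤ T1 * (Sj2 ^ 2) ^ (j+1) := e3
        _ = (T1 * Sj2 ^ j) * Sj2 ^ (j+2) := e4
        _ ≤ Sj1 ^ (j+1) * Sj2 ^ (j+2) := e5
        _ = Sj2 ^ (j+2) * Sj1 ^ (j+1) := mul_comm _ _
    have hp : 0 < Sj1 ^ (j+1) := by positivity
    have := le_of_mul_le_mul_right key hp
    calc T1 * Sj3 ^ (j+1) = T1 * Sj3 ^ (j+1) := rfl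
      _ ≤ Sj2 ^ (j+2) := this

/-- Lower bound for `Σ_i σ_{k−1}(λ|i)` in terms of `S_k(λ)` and `max_i λ_i`. -/
theorem sum_esymmDel_lower_bound (n k : ℕ) (hk : 2 ≤ k) (hkn : k ≤ n) :
    ∃ c : ℝ, 0 < c ∧ ∀ lam : Fin n → ℝ, GammaCone n k lam →
      c * esymmS n k lam ^ (((k : ℝ) - 2) / ((k : ℝ) - 1)) *
          (Finset.univ.sup' (Finset.univ_nonempty_iff.mpr ⟨⟨0, by omega⟩⟩) lam) ^
            ((1 : ℝ) / ((k : ℝ) - 1)) ≤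
        ∑ i : Fin n, esymmDel n (k - 1) lam i := by
  refine ⟨1, one_pos, ?_⟩
  intro lam hG
  set M := Finset.univ.sup' (Finset.univ_nonempty_iff.mpr ⟨⟨0, by omega⟩⟩) lam with hM
  have hS1 : 0 < esymmS n 1 lam := hG 1 le_rfl (by omega)
  have hS2 : 0 < esymmS n 2 lam := hG 2 (by omega) hk
  have hSk : 0 < esymmS n k lam := hG k (by omega) le_rfl
  have hSk1 : 0 < esymmS n (k-1) lam := hG (k-1) (by omega) (by omega)
  -- M > 0
  have hMpos : 0 < M := by
    have hsum : (0:ℝ) < ∑ i, lam i := by rw [← esymmS_one]; exact hS1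
    have : ∑ i : Fin n, (0:ℝ) < ∑ i, lam i := by simpa using hsum
    obtain ⟨i, _, hi⟩ := Finset.exists_lt_of_sum_lt this
    calc (0:ℝ) < lam i := hi
      _ ≤ M := Finset.le_sup' lam (Finset.mem_univ i)
  -- M < S1
  have hMS1 : M ≤ esymmS n 1 lam := by
    obtain ⟨i0, _, hi0⟩ := Finset.exists_mem_eq_sup'
      (Finset.univ_nonempty_iff.mpr ⟨⟨0, by omega⟩⟩ : (Finset.univ : Finset (Fin n)).Nonempty) lam
    have hi0' : M = lam i0 := by rw [hM]; exact hi0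
    have hsq : M^2 ≤ ∑ i, (lam i)^2 := by
      rw [hi0']
      exact Finset.single_le_sum (fun i _ => sq_nonneg (lam i)) (Finset.mem_univ i0)
    have hid := sq_sum_id n lam
    have hlt : M^2 < (esymmS n 1 lam)^2 := by
      rw [hid]
      nlinarith [hS2]
    exact le_of_lt (lt_of_pow_lt_pow_left₀ 2 (le_of_lt hS1) hlt)
  -- main chain
  have hchain := chain_ineq n k lam hkn hG (k-2) (by omega)
  have hch : esymmS n 1 lam * esymmS n k lam ^ (k-2) ≤ esymmS n (k-1) lam ^ (k-1) := by
    have e2 : k - 2 + 2 = k := by omega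
    have e1 : k - 2 + 1 = k - 1 := by omega
    rw [e2, e1] at hchain
    exact hchain
  -- rpow manipulations
  set e1 : ℝ := ((k : ℝ) - 2) / ((k : ℝ) - 1)
  set e2 : ℝ := (1 : ℝ) / ((k : ℝ) - 1)
  set X := esymmS n k lam ^ e1 * M ^ e2 with hX
  have hk1ne : ((k:ℝ) - 1) ≠ 0 := by
    have : (2:ℝ) ≤ (k:ℝ) := by exact_mod_cast hk
    linarith
  have hXpos : 0 < X := mul_pos (Real.rpow_pos_of_pos hSk e1) (Real.rpow_pos_of_pos hMpos e2)
  have hcast : ((k - 1 : ℕ) : ℝ) = (k:ℝ) - 1 := by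
    rw [Nat.cast_sub (by omega : 1 ≤ k)]; norm_num
  have hcast2 : ((k - 2 : ℕ) : ℝ) = (k:ℝ) - 2 := by
    rw [Nat.cast_sub hk]; norm_num
  have hXpow : X ^ (k-1) = esymmS n k lam ^ (k-2) * M := by
    rw [hX, mul_pow]
    have p1 : (esymmS n k lam ^ e1) ^ (k-1) = esymmS n k lam ^ (k-2) := by
      rw [← Real.rpow_natCast (esymmS n k lam ^ e1) (k-1), ← Real.rpow_mul (le_of_lt hSk)]
      rw [hcast]
      have : e1 * ((k:ℝ) - 1) = (k:ℝ) - 2 := by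
        show (((k:ℝ) - 2) / ((k:ℝ) - 1)) * ((k:ℝ) - 1) = (k:ℝ) - 2
        field_simp
      rw [this, ← hcast2, Real.rpow_natCast]
    have p2 : (M ^ e2) ^ (k-1) = M := by
      rw [← Real.rpow_natCast (M ^ e2) (k-1), ← Real.rpow_mul (le_of_lt hMpos)]
      rw [hcast]
      have : e2 * ((k:ℝ) - 1) = 1 := by
        show ((1:ℝ) / ((k:ℝ) - 1)) * ((k:ℝ) - 1) = 1
        field_simp
      rw [this, Real.rpow_one]
    rw [p1, p2]
  have hXle : X ≤ esymmS n (k-1) lam := by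
    apply le_of_pow_le_pow_left₀ (by omega : k - 1 ≠ 0) (le_of_lt hSk1)
    rw [hXpow]
    calc esymmS n k lam ^ (k-2) * M ≤ esymmS n k lam ^ (k-2) * esymmS n 1 lam :=
          mul_le_mul_of_nonneg_left hMS1 (by positivity)
      _ = esymmS n 1 lam * esymmS n k lam ^ (k-2) := mul_comm _ _
      _ ≤ esymmS n (k-1) lam ^ (k-1) := hch
  -- assemble
  rw [sum_esymmDel_eq]
  have hcoef : (1:ℝ) ≤ ((n - (k-1) : ℕ) : ℝ) := by
    have : 1 ≤ n - (k-1) := by omega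
    exact_mod_cast this
  calc 1 * esymmS n k lam ^ e1 * M ^ e2 = X := by rw [hX]; ring
    _ ≤ esymmS n (k-1) lam := hXle
    _ = 1 * esymmS n (k-1) lam := (one_mul _).symm
    _ ≤ ((n - (k-1) : ℕ) : ℝ) * esymmS n (k-1) lam :=
        mul_le_mul_of_nonneg_right hcoef (le_of_lt hSk1)
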